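/- If μ̄ > rT/T̄ with r > 0 and 0 < T̄ < T, then y_{0min} < y_{0max} whenever both are positive, i.e., ((μ̄−r−1)/(r+1))·(e^{((r+1)/μ̄)(μ̄T̄−(r+1)T)} − 1)/(e^{((r+1)T/μ̄)(μ̄−r−1)} − 1) < ((μ̄−r)/r)·(e^{(r/μ̄)(μ̄T̄−rT)} − 1)/(e^{(rT/μ̄)(μ̄−r)} − 1), assuming additionally μ̄ > (r+1)T/T̄. -/

import Mathlib

open Real

lemma exp_sub_one_pos {x : ℝ} (hx : 0 < x) : 0 < Real.exp x - 1 :=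
  sub_pos.mpr (Real.one_lt_exp_iff.mpr hx)

lemma psi_pos {x : ℝ} (hx : 0 < x) : 1 / x < Real.exp x / (Real.exp x - 1) := by
  have hP := exp_sub_one_pos hx
  rw [div_lt_div_iff₀ hx hP]
  have h := Real.add_one_lt_exp (neg_ne_zero.mpr hx.ne')
  have h2 : (-x + 1) * Real.exp x < Real.exp (-x) * Real.exp x :=
    mul_lt_mul_of_pos_right h (Real.exp_pos x)
  rw [← Real.exp_add, neg_add_cancel, Real.exp_zero] at h2
  nlinarith

lemma psi_lt_one {x : ℝ} (hx : 0 < x) :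
    Real.exp x / (Real.exp x - 1) - 1 / x < 1 := by
  have hP := exp_sub_one_pos hx
  have h := Real.add_one_lt_exp hx.ne'
  rw [sub_lt_iff_lt_add, show (1 : ℝ) + 1 / x = (x + 1) / x by field_simp,
    div_lt_div_iff₀ hP hx]
  nlinarith

lemma E_ge_one {x : ℝ} (hx : 0 < x) : 1 ≤ Real.exp x / (Real.exp x - 1) := by
  have hP := exp_sub_one_pos hx
  rw [le_div_iff₀ hP]; linarith

set_option maxHeartbeats 1000000 in
lemma key_deriv_neg (μ T Tbar s : ℝ) (hμ : 0 < μ) (hs : 0 < s)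
    (hTb : 0 < Tbar) (hTT : Tbar < T) (hdom : s * T < μ * Tbar) :
    -1 / (μ - s) - s⁻¹
      + Real.exp (s * Tbar - s ^ 2 * (T / μ)) * (Tbar - 2 * s * (T / μ)) /
          (Real.exp (s * Tbar - s ^ 2 * (T / μ)) - 1)
      - Real.exp (s * T - s ^ 2 * (T / μ)) * (T - 2 * s * (T / μ)) /
          (Real.exp (s * T - s ^ 2 * (T / μ)) - 1) < 0 := by
  have hT : 0 < T := hTb.trans hTT
  have hμs : s < μ := by nlinarith [mul_lt_mul_of_pos_left hTT hμ]
  have hμs' : 0 < μ - s := sub_pos.mpr hμs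
  have hstμ : s * (T / μ) < Tbar := by
    rw [mul_div_assoc', div_lt_iff₀ hμ]; nlinarith
  have hstμ0 : 0 < s * (T / μ) := mul_pos hs (div_pos hT hμ)
  obtain ⟨u, hu_def⟩ : ∃ x, x = s * Tbar - s ^ 2 * (T / μ) := ⟨_, rfl⟩
  obtain ⟨v, hv_def⟩ : ∃ x, x = s * T - s ^ 2 * (T / μ) := ⟨_, rfl⟩
  obtain ⟨α, hα_def⟩ : ∃ x, x = Tbar - 2 * s * (T / μ) := ⟨_, rfl⟩
  obtain ⟨β, hβ_def⟩ : ∃ x, x = T - 2 * s * (T / μ) := ⟨_, rfl⟩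
  rw [← hu_def, ← hv_def, ← hα_def, ← hβ_def]
  have hu : 0 < u := by
    rw [hu_def]; nlinarith [mul_lt_mul_of_pos_left hstμ hs]
  have hv : 0 < v := by
    rw [hv_def]; nlinarith [mul_lt_mul_of_pos_left hstμ hs,
      mul_lt_mul_of_pos_left hTT hs]
  have huv : u ≤ v := by
    rw [hu_def, hv_def]; nlinarith [mul_lt_mul_of_pos_left hTT hs]
  have hPu := exp_sub_one_pos hu
  have hPv := exp_sub_one_pos hv
  obtain ⟨a, ha_def⟩ : ∃ x, x = Real.exp u / (Real.exp u - 1) - 1 / u := ⟨_, rfl⟩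
  obtain ⟨b, hb_def⟩ : ∃ x, x = Real.exp v / (Real.exp v - 1) - 1 / v := ⟨_, rfl⟩
  have ha0 : 0 < a := by rw [ha_def]; exact sub_pos.mpr (psi_pos hu)
  have ha1 : a < 1 := by rw [ha_def]; exact psi_lt_one hu
  have ha2 : 1 - 1 / u ≤ a := by
    have := E_ge_one hu; rw [ha_def]; linarith
  have hb0 : 0 < b := by rw [hb_def]; exact sub_pos.mpr (psi_pos hv)
  have hb1 : b < 1 := by rw [hb_def]; exact psi_lt_one hv
  have hb2 : 1 - 1 / v ≤ b := by
    have := E_ge_one hv; rw [hb_def]; linarith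
  have hβα : β = α + (T - Tbar) := by rw [hα_def, hβ_def]; ring
  have hαub : α < Tbar := by rw [hα_def]; linarith
  have hαlb : -Tbar < α := by rw [hα_def]; linarith
  have hD : 0 < T - Tbar := sub_pos.mpr hTT
  have e1 : Real.exp u * α / (Real.exp u - 1) = α * a + α / u := by
    rw [ha_def]; field_simp; ring
  have e2 : Real.exp v * β / (Real.exp v - 1) = β * b + β / v := by
    rw [hb_def]; field_simp; ring
  -- the exact algebraic identity
  have hw : 0 < Tbar - s * (T / μ) := by linarith
  have i1 : α / u + Tbar / u = 2 * (1 / s) := by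
    rw [hα_def, hu_def,
      show s * Tbar - s ^ 2 * (T / μ) = s * (Tbar - s * (T / μ)) by ring,
      ← add_div,
      show Tbar - 2 * s * (T / μ) + Tbar = 2 * (Tbar - s * (T / μ)) by ring]
    have hX : 0 < Tbar * μ - s * T := by nlinarith
    field_simp
  have i2 : β / v = 1 / s - 1 / (μ - s) := by
    rw [hβ_def, hv_def,
      show s * T - s ^ 2 * (T / μ) = s * (T / μ) * (μ - s) by field_simp,
      show T - 2 * s * (T / μ) = (T / μ) * (μ - 2 * s) by field_simp]
    rw [div_eq_iff (by positivity)]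
    field_simp
    ring
  have e3 : α / u - β / v - 1 / (μ - s) - s⁻¹ = -(Tbar / u) := by
    rw [← one_div s] ; linarith [i1, i2]
  have hbound : α * a - β * b < Tbar / u := by
    have h1u : 0 < 1 / u := by positivity
    have hvu : 1 / v ≤ 1 / u := one_div_le_one_div_of_le hu huv
    rw [← mul_one_div Tbar u, hβα]
    rcases le_or_gt 0 α with hα | hα
    · have hab : a - b ≤ 1 / u := by linarith
      have t1 : α * (a - b) ≤ α * (1 / u) := mul_le_mul_of_nonneg_left hab hα
      have t2 : α * (1 / u) < Tbar * (1 / u) := mul_lt_mul_of_pos_right hαub h1u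
      have t3 : 0 < (T - Tbar) * b := mul_pos hD hb0
      linarith
    · have hab : -(1 / u) ≤ a - b := by linarith
      have t1 : α * (a - b) ≤ α * (-(1 / u)) := mul_le_mul_of_nonpos_left hab hα.le
      have t2 : -α * (1 / u) < Tbar * (1 / u) :=
        mul_lt_mul_of_pos_right (by linarith) h1u
      have t3 : 0 < (T - Tbar) * b := mul_pos hD hb0
      linarith
  rw [e1, e2]
  have h4 : (-1) / (μ - s) = -(1 / (μ - s)) := by ring
  linarith [e3, hbound, h4]

noncomputable def Gfun (μ Tbar T : ℝ) : ℝ → ℝ := fun x =>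
  Real.log (μ - x) - Real.log x
    + Real.log (Real.exp (x * Tbar - x ^ 2 * (T / μ)) - 1)
    - Real.log (Real.exp (x * T - x ^ 2 * (T / μ)) - 1)

lemma G_hasDeriv (μ T Tbar s : ℝ) (hμ : 0 < μ) (hs : 0 < s)
    (hTb : 0 < Tbar) (hTT : Tbar < T) (hdom : s * T < μ * Tbar) :
    HasDerivAt (Gfun μ Tbar T)
      (-1 / (μ - s) - s⁻¹
        + Real.exp (s * Tbar - s ^ 2 * (T / μ)) * (Tbar - 2 * s * (T / μ)) /
            (Real.exp (s * Tbar - s ^ 2 * (T / μ)) - 1)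
        - Real.exp (s * T - s ^ 2 * (T / μ)) * (T - 2 * s * (T / μ)) /
            (Real.exp (s * T - s ^ 2 * (T / μ)) - 1)) s := by
  have hT : 0 < T := hTb.trans hTT
  have hμs : s < μ := by nlinarith [mul_lt_mul_of_pos_left hTT hμ]
  have hμs' : 0 < μ - s := sub_pos.mpr hμs
  have hstμ : s * (T / μ) < Tbar := by
    rw [mul_div_assoc', div_lt_iff₀ hμ]; nlinarith
  have hu : 0 < s * Tbar - s ^ 2 * (T / μ) := by
    nlinarith [mul_lt_mul_of_pos_left hstμ hs]
  have hv : 0 < s * T - s ^ 2 * (T / μ) := by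
    nlinarith [mul_lt_mul_of_pos_left hstμ hs, mul_lt_mul_of_pos_left hTT hs]
  have hPu := exp_sub_one_pos hu
  have hPv := exp_sub_one_pos hv
  have d1 : HasDerivAt (fun x : ℝ => Real.log (μ - x)) (-1 / (μ - s)) s := by
    have h := ((hasDerivAt_id s).const_sub μ).log hμs'.ne'
    simpa using h
  have d2 : HasDerivAt (fun x : ℝ => Real.log x) s⁻¹ s := Real.hasDerivAt_log hs.ne'
  have p1 : HasDerivAt (fun x : ℝ => x * Tbar - x ^ 2 * (T / μ))
      (Tbar - 2 * s * (T / μ)) s := by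
    have h := ((hasDerivAt_id s).mul_const Tbar).sub
      ((hasDerivAt_pow 2 s).mul_const (T / μ))
    refine h.congr_deriv ?_
    push_cast
    ring
  have p2 : HasDerivAt (fun x : ℝ => x * T - x ^ 2 * (T / μ))
      (T - 2 * s * (T / μ)) s := by
    have h := ((hasDerivAt_id s).mul_const T).sub
      ((hasDerivAt_pow 2 s).mul_const (T / μ))
    refine h.congr_deriv ?_
    push_cast
    ring
  have d3 := ((p1.exp).sub_const 1).log hPu.ne'
  have d4 := ((p2.exp).sub_const 1).log hPv.ne'
  exact ((d1.sub d2).add d3).sub d4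

lemma G_exp_eq (μ T Tbar s : ℝ) (hμ : 0 < μ) (hs : 0 < s)
    (hTb : 0 < Tbar) (hTT : Tbar < T) (hdom : s * T < μ * Tbar) :
    Real.exp (Gfun μ Tbar T s)
      = (μ - s) / s * (Real.exp (s * Tbar - s ^ 2 * (T / μ)) - 1) /
          (Real.exp (s * T - s ^ 2 * (T / μ)) - 1) := by
  have hT : 0 < T := hTb.trans hTT
  have hμs : s < μ := by nlinarith [mul_lt_mul_of_pos_left hTT hμ]
  have hμs' : 0 < μ - s := sub_pos.mpr hμs
  have hstμ : s * (T / μ) < Tbar := by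
    rw [mul_div_assoc', div_lt_iff₀ hμ]; nlinarith
  have hu : 0 < s * Tbar - s ^ 2 * (T / μ) := by
    nlinarith [mul_lt_mul_of_pos_left hstμ hs]
  have hv : 0 < s * T - s ^ 2 * (T / μ) := by
    nlinarith [mul_lt_mul_of_pos_left hstμ hs, mul_lt_mul_of_pos_left hTT hs]
  have hPu := exp_sub_one_pos hu
  have hPv := exp_sub_one_pos hv
  rw [Gfun, Real.exp_sub, Real.exp_add, Real.exp_sub,
    Real.exp_log hμs', Real.exp_log hs, Real.exp_log hPu, Real.exp_log hPv]

set_option maxHeartbeats 1000000 in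
theorem y0min_lt_y0max
    (μ r Tbar T : ℝ) (hr : 0 < r) (hTbar : 0 < Tbar) (hT : Tbar < T)
    (hμ0 : r * T / Tbar < μ) (hμ1 : (r + 1) * T / Tbar < μ) :
    ((μ - r - 1) / (r + 1)) *
        (Real.exp (((r + 1) / μ) * (μ * Tbar - (r + 1) * T)) - 1) /
        (Real.exp (((r + 1) * T / μ) * (μ - r - 1)) - 1)
      < ((μ - r) / r) *
        (Real.exp ((r / μ) * (μ * Tbar - r * T)) - 1) /
        (Real.exp ((r * T / μ) * (μ - r)) - 1) := by
  have hT0 : 0 < T := hTbar.trans hT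
  have hμ : 0 < μ := lt_trans (by positivity) hμ1
  have hdom1 : (r + 1) * T < μ * Tbar := by
    rw [div_lt_iff₀ hTbar] at hμ1; nlinarith
  have hdom0 : r * T < μ * Tbar := by
    rw [div_lt_iff₀ hTbar] at hμ0; nlinarith
  -- strict antitonicity of Gfun on [r, r+1]
  have hanti : StrictAntiOn (Gfun μ Tbar T) (Set.Icc r (r + 1)) := by
    apply strictAntiOn_of_deriv_neg (convex_Icc r (r + 1))
    · intro x hx
      have hx0 : 0 < x := lt_of_lt_of_le hr hx.1
      have hdx : x * T < μ * Tbar := by nlinarith [hx.2]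
      exact ((G_hasDeriv μ T Tbar x hμ hx0 hTbar hT hdx).differentiableAt).continuousAt.continuousWithinAt
    · intro x hx
      rw [interior_Icc] at hx
      have hx0 : 0 < x := hr.trans hx.1
      have hdx : x * T < μ * Tbar := by nlinarith [hx.2]
      rw [(G_hasDeriv μ T Tbar x hμ hx0 hTbar hT hdx).deriv]
      exact key_deriv_neg μ T Tbar x hμ hx0 hTbar hT hdx
  have hGr : Gfun μ Tbar T (r + 1) < Gfun μ Tbar T r :=
    hanti ⟨le_refl r, by linarith⟩ ⟨by linarith, le_refl (r + 1)⟩ (by linarith)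
  have hlt := Real.exp_lt_exp.mpr hGr
  rw [G_exp_eq μ T Tbar (r + 1) hμ (by linarith) hTbar hT hdom1,
    G_exp_eq μ T Tbar r hμ hr hTbar hT hdom0] at hlt
  have a1 : ((r + 1) / μ) * (μ * Tbar - (r + 1) * T)
      = (r + 1) * Tbar - (r + 1) ^ 2 * (T / μ) := by field_simp
  have a2 : ((r + 1) * T / μ) * (μ - r - 1)
      = (r + 1) * T - (r + 1) ^ 2 * (T / μ) := by field_simp; ring
  have a3 : (r / μ) * (μ * Tbar - r * T) = r * Tbar - r ^ 2 * (T / μ) := by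
    field_simp
  have a4 : (r * T / μ) * (μ - r) = r * T - r ^ 2 * (T / μ) := by
    field_simp
  have a5 : μ - r - 1 = μ - (r + 1) := by ring
  rw [a1, a2, a3, a4, a5]
  exact hlt
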